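/- Let $p_1, p_2, q_1, q_2 \in \mathcal{P}_1(\mathbb{R})$ satisfy $p_1 + p_2 = q_1 + q_2$ and $\int y\,p_i(dy) = \int y\,q_i(dy)$ for $i = 1,2$. Suppose $p_i^k \to p_i$ in $\mathcal{W}_1$ for $i = 1,2$. Then there exist sequences $(q_i^k)_k$ in $\mathcal{P}_1(\mathbb{R})$ with $q_1^k + q_2^k = p_1^k + p_2^k$, $\int y\,q_i^k(dy) = \int y\,p_i^k(dy)$ for $i=1,2$ and all $k$, and $q_i^k \to q_i$ in $\mathcal{W}_1$. -/

import Mathlib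

open MeasureTheory Filter Topology
open Set ProbabilityTheory
open scoped ENNReal

noncomputable section

/-- A coupling of `μ` and `ν`: a measure on the product with the given marginals. -/
def IsCoupling {X Y : Type*} [MeasurableSpace X] [MeasurableSpace Y]
    (π : Measure (X × Y)) (μ : Measure X) (ν : Measure Y) : Prop :=
  π.map Prod.fst = μ ∧ π.map Prod.snd = ν

/-- `WrPow r p q` is the `r`-th power of the `r`-Wasserstein distance:
`inf { ∫ d(y₁,y₂)^r dπ : π coupling of p, q }`. -/
noncomputable def WrPow {Y : Type*} [MeasurableSpace Y] [PseudoMetricSpace Y]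
    (r : ℝ) (p q : Measure Y) : ℝ :=
  sInf {v | ∃ π : Measure (Y × Y), IsCoupling π p q ∧ v = ∫ z, dist z.1 z.2 ^ r ∂π}

/-- Convergence in the `r`-Wasserstein metric. -/
def TendstoWr {Y : Type*} [MeasurableSpace Y] [PseudoMetricSpace Y]
    (r : ℝ) (pk : ℕ → Measure Y) (p : Measure Y) : Prop :=
  Tendsto (fun k => WrPow r (pk k) p) atTop (nhds 0)

/-- Finite `r`-th moment. -/
def FiniteMomentR {Y : Type*} [MeasurableSpace Y] [PseudoMetricSpace Y]
    (r : ℝ) (p : Measure Y) : Prop :=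
  ∃ y0 : Y, Integrable (fun y => dist y y0 ^ r) p

/-- Membership in `𝒫_r(Y)`: a probability measure with finite `r`-th moment. -/
def MemPr {Y : Type*} [MeasurableSpace Y] [PseudoMetricSpace Y]
    (r : ℝ) (p : Measure Y) : Prop :=
  IsProbabilityMeasure p ∧ FiniteMomentR r p

namespace MartApprox

/-- transport cost in `ℝ≥0∞`. -/
noncomputable def ecost (γ : Measure (ℝ × ℝ)) : ℝ≥0∞ := ∫⁻ z, edist z.1 z.2 ∂γ

lemma integral_rpow_one_eq_toReal_ecost (γ : Measure (ℝ × ℝ)) :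
    ∫ z, dist z.1 z.2 ^ (1:ℝ) ∂γ = (ecost γ).toReal := by
  simp_rw [Real.rpow_one]
  rw [integral_eq_lintegral_of_nonneg_ae (Eventually.of_forall fun z => dist_nonneg)
      ((continuous_fst.dist continuous_snd).aestronglyMeasurable)]
  congr 1
  exact lintegral_congr fun z => (edist_dist z.1 z.2).symm

lemma WrPow_le_ecost {p q : Measure ℝ} {γ : Measure (ℝ × ℝ)} (hγ : IsCoupling γ p q) :
    WrPow 1 p q ≤ (ecost γ).toReal := by
  have hbdd : BddBelow {v | ∃ π : Measure (ℝ×ℝ), IsCoupling π p q ∧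
      v = ∫ z, dist z.1 z.2 ^ (1:ℝ) ∂π} := by
    refine ⟨0, ?_⟩
    rintro v ⟨π, hπ, rfl⟩
    exact integral_nonneg fun z => Real.rpow_nonneg dist_nonneg _
  have hmem : (ecost γ).toReal ∈ {v | ∃ π : Measure (ℝ×ℝ), IsCoupling π p q ∧
      v = ∫ z, dist z.1 z.2 ^ (1:ℝ) ∂π} :=
    ⟨γ, hγ, (integral_rpow_one_eq_toReal_ecost γ).symm⟩
  exact csInf_le hbdd hmem

lemma WrPow_nonneg (p q : Measure ℝ) : 0 ≤ WrPow 1 p q := by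
  apply Real.sInf_nonneg
  rintro v ⟨π, hπ, rfl⟩
  exact integral_nonneg fun z => Real.rpow_nonneg dist_nonneg _

lemma isCoupling_prod (p q : Measure ℝ) [IsProbabilityMeasure p] [IsProbabilityMeasure q] :
    IsCoupling (p.prod q) p q := by
  constructor
  · rw [Measure.map_fst_prod]; simp
  · rw [Measure.map_snd_prod]; simp

lemma exists_coupling_lt {p q : Measure ℝ} [IsProbabilityMeasure p] [IsProbabilityMeasure q]
    {δ : ℝ} (hδ : 0 < δ) :
    ∃ γ : Measure (ℝ × ℝ), IsCoupling γ p q ∧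
      ∫ z, dist z.1 z.2 ^ (1:ℝ) ∂γ < WrPow 1 p q + δ := by
  have hne : {v | ∃ π : Measure (ℝ×ℝ), IsCoupling π p q ∧
      v = ∫ z, dist z.1 z.2 ^ (1:ℝ) ∂π}.Nonempty :=
    ⟨_, ⟨p.prod q, isCoupling_prod p q, rfl⟩⟩
  obtain ⟨v, ⟨π, hπ, rfl⟩, hv⟩ := Real.lt_sInf_add_pos hne hδ
  exact ⟨π, hπ, hv⟩

/-- Integrability of the first coordinate under a coupling. -/
lemma integrable_fst {γ : Measure (ℝ × ℝ)} {p q : Measure ℝ} (hγ : IsCoupling γ p q)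
    (h : Integrable (fun y : ℝ => y) p) : Integrable (fun z : ℝ × ℝ => z.1) γ := by
  have := (integrable_map_measure (f := Prod.fst) (g := fun y : ℝ => y)
      (by rw [hγ.1]; exact h.1) measurable_fst.aemeasurable).mp (by rw [hγ.1]; exact h)
  exact this

lemma integrable_snd {γ : Measure (ℝ × ℝ)} {p q : Measure ℝ} (hγ : IsCoupling γ p q)
    (h : Integrable (fun y : ℝ => y) q) : Integrable (fun z : ℝ × ℝ => z.2) γ := by
  have := (integrable_map_measure (f := Prod.snd) (g := fun y : ℝ => y)
      (by rw [hγ.2]; exact h.1) measurable_snd.aemeasurable).mp (by rw [hγ.2]; exact h)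
  exact this

lemma integrable_dist_coupling {γ : Measure (ℝ × ℝ)} {p q : Measure ℝ} (hγ : IsCoupling γ p q)
    (hp : Integrable (fun y : ℝ => y) p) (hq : Integrable (fun y : ℝ => y) q) :
    Integrable (fun z : ℝ × ℝ => dist z.1 z.2) γ := by
  have h1 := (integrable_fst hγ hp).abs
  have h2 := (integrable_snd hγ hq).abs
  refine (h1.add h2).mono' ((continuous_fst.dist continuous_snd).aestronglyMeasurable) ?_
  refine Eventually.of_forall fun z => ?_
  rw [Real.norm_eq_abs, abs_of_nonneg dist_nonneg, Real.dist_eq]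
  exact (abs_sub _ _).trans (le_refl _)






lemma integral_fst_coupling {γ : Measure (ℝ × ℝ)} {p q : Measure ℝ} (hγ : IsCoupling γ p q) :
    ∫ z, z.1 ∂γ = ∫ y, y ∂p := by
  rw [← hγ.1]
  exact (integral_map (f := fun y : ℝ => y) measurable_fst.aemeasurable
    measurable_id.aestronglyMeasurable).symm

lemma integral_snd_coupling {γ : Measure (ℝ × ℝ)} {p q : Measure ℝ} (hγ : IsCoupling γ p q) :
    ∫ z, z.2 ∂γ = ∫ y, y ∂q := by
  rw [← hγ.2]
  exact (integral_map (f := fun y : ℝ => y) measurable_snd.aemeasurable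
    measurable_id.aestronglyMeasurable).symm

lemma ecost_eq_ofReal {γ : Measure (ℝ × ℝ)} {p q : Measure ℝ} (hγ : IsCoupling γ p q)
    (hp : Integrable (fun y : ℝ => y) p) (hq : Integrable (fun y : ℝ => y) q) :
    ecost γ = ENNReal.ofReal (∫ z : ℝ × ℝ, dist z.1 z.2 ∂γ) := by
  rw [ofReal_integral_eq_lintegral_ofReal (integrable_dist_coupling hγ hp hq)
    (Eventually.of_forall fun z => dist_nonneg)]
  exact lintegral_congr fun z : ℝ × ℝ => (edist_dist z.1 z.2)

/-- difference of means is at most the cost of any coupling. -/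
lemma abs_integral_sub_le {γ : Measure (ℝ × ℝ)} {p q : Measure ℝ} (hγ : IsCoupling γ p q)
    (hp : Integrable (fun y : ℝ => y) p) (hq : Integrable (fun y : ℝ => y) q) :
    |∫ y, y ∂p - ∫ y, y ∂q| ≤ (ecost γ).toReal := by
  have h1 := integrable_fst hγ hp
  have h2 := integrable_snd hγ hq
  rw [← integral_fst_coupling hγ, ← integral_snd_coupling hγ, ← integral_sub h1 h2]
  rw [ecost_eq_ofReal hγ hp hq,
    ENNReal.toReal_ofReal (integral_nonneg fun z => dist_nonneg)]
  calc |∫ z, (z.1 - z.2) ∂γ| ≤ ∫ z, |z.1 - z.2| ∂γ := by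
        simpa [Real.norm_eq_abs] using
          norm_integral_le_integral_norm (μ := γ) (fun z : ℝ × ℝ => z.1 - z.2)
    _ = ∫ z, dist z.1 z.2 ∂γ := by simp_rw [Real.dist_eq]



lemma coupling_finite {γ : Measure (ℝ × ℝ)} {p q : Measure ℝ} (hγ : IsCoupling γ p q)
    [IsFiniteMeasure p] : IsFiniteMeasure γ := by
  constructor
  have : γ Set.univ = (γ.map Prod.fst) Set.univ := by
    rw [Measure.map_apply measurable_fst MeasurableSet.univ]; rfl
  rw [this, hγ.1]
  exact measure_lt_top p Set.univ

lemma glue {a b c : Measure ℝ} [IsFiniteMeasure a] [IsFiniteMeasure b] [IsFiniteMeasure c]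
    {γ ρ : Measure (ℝ × ℝ)} (hγ : IsCoupling γ a b) (hρ : IsCoupling ρ b c) :
    ∃ η : Measure (ℝ × ℝ), IsCoupling η a c ∧ ecost η ≤ ecost γ + ecost ρ := by
  haveI : IsFiniteMeasure γ := coupling_finite hγ
  haveI : IsFiniteMeasure ρ := coupling_finite hρ
  set κ := ρ.condKernel with hκ
  have hfst : ρ.fst = b := hρ.1
  set κ' : Kernel (ℝ × ℝ) ℝ := κ.comap Prod.snd measurable_snd with hκ'
  haveI : IsMarkovKernel κ' := by
    constructor; intro z
    simp only [hκ', Kernel.comap_apply]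
    infer_instance
  set M := γ ⊗ₘ κ' with hM
  have hg : Measurable (fun p : (ℝ × ℝ) × ℝ => (p.1.2, p.2)) :=
    (measurable_snd.comp measurable_fst).prodMk measurable_snd
  have hf : Measurable (fun p : (ℝ × ℝ) × ℝ => (p.1.1, p.2)) :=
    (measurable_fst.comp measurable_fst).prodMk measurable_snd
  have factA : M.map (fun p : (ℝ × ℝ) × ℝ => (p.1.2, p.2)) = ρ := by
    ext s hs
    rw [Measure.map_apply hg hs, hM, Measure.compProd_apply (hg hs)]
    have : ∀ z : ℝ × ℝ, κ' z (Prod.mk z ⁻¹' ((fun p : (ℝ × ℝ) × ℝ => (p.1.2, p.2)) ⁻¹' s))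
        = κ z.2 (Prod.mk z.2 ⁻¹' s) := by
      intro z; rw [hκ', Kernel.comap_apply]; rfl
    simp_rw [this]
    calc ∫⁻ z : ℝ × ℝ, κ z.2 (Prod.mk z.2 ⁻¹' s) ∂γ
        = ∫⁻ y, κ y (Prod.mk y ⁻¹' s) ∂(γ.map Prod.snd) :=
          (lintegral_map (Kernel.measurable_kernel_prodMk_left hs) measurable_snd).symm
      _ = ρ s := by
          rw [hγ.2, ← hfst, ← Measure.compProd_apply hs, Measure.disintegrate]
  have factB : M.map Prod.fst = γ := Measure.fst_compProd γ κ'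
  refine ⟨M.map (fun p : (ℝ × ℝ) × ℝ => (p.1.1, p.2)), ⟨?_, ?_⟩, ?_⟩
  · rw [Measure.map_map measurable_fst hf]
    have : (Prod.fst ∘ fun p : (ℝ × ℝ) × ℝ => (p.1.1, p.2)) =
        (Prod.fst ∘ Prod.fst : (ℝ × ℝ) × ℝ → ℝ) := rfl
    rw [this, ← Measure.map_map measurable_fst measurable_fst, factB, hγ.1]
  · rw [Measure.map_map measurable_snd hf]
    have : (Prod.snd ∘ fun p : (ℝ × ℝ) × ℝ => (p.1.1, p.2)) =
        (Prod.snd ∘ fun p : (ℝ × ℝ) × ℝ => (p.1.2, p.2)) := rfl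
    rw [this, ← Measure.map_map measurable_snd hg, factA, hρ.2]
  · simp only [ecost]
    rw [lintegral_map (measurable_fst.edist measurable_snd) hf]
    have hb1 : Measurable fun p : (ℝ × ℝ) × ℝ => edist p.1.1 p.1.2 :=
      (measurable_fst.comp measurable_fst).edist (measurable_snd.comp measurable_fst)
    have hb2 : Measurable fun p : (ℝ × ℝ) × ℝ => edist p.1.2 p.2 :=
      (measurable_snd.comp measurable_fst).edist measurable_snd
    calc ∫⁻ p : (ℝ × ℝ) × ℝ, edist p.1.1 p.2 ∂M
        ≤ ∫⁻ p : (ℝ × ℝ) × ℝ, (edist p.1.1 p.1.2 + edist p.1.2 p.2) ∂M :=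
          lintegral_mono fun p => edist_triangle _ _ _
      _ = (∫⁻ p : (ℝ × ℝ) × ℝ, edist p.1.1 p.1.2 ∂M)
          + ∫⁻ p : (ℝ × ℝ) × ℝ, edist p.1.2 p.2 ∂M := lintegral_add_left hb1 _
      _ = ecost γ + ecost ρ := by
          congr 1
          · simp only [ecost]
            rw [← factB, lintegral_map (measurable_fst.edist measurable_snd) measurable_fst]
          · simp only [ecost]
            rw [← factA, lintegral_map (measurable_fst.edist measurable_snd) hg]



lemma exists_quantile (μ : Measure ℝ) [IsFiniteMeasure μ] (h2 : μ Set.univ = 2) :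
    ∃ a : ℝ, μ (Set.Ioi a) ≤ 1 ∧ 1 ≤ μ (Set.Ici a) := by
  set S : Set ℝ := {x | μ (Set.Ioi x) ≤ 1} with hS
  have hne : S.Nonempty := by
    have h1 : Tendsto (fun n : ℕ => μ (Set.Ioi (n : ℝ))) atTop (nhds (μ (⋂ n : ℕ, Set.Ioi (n : ℝ)))) := by
      apply tendsto_measure_iInter_atTop
      · exact fun n => measurableSet_Ioi.nullMeasurableSet
      · intro m n hmn
        exact Set.Ioi_subset_Ioi (by exact_mod_cast hmn)
      · exact ⟨0, measure_ne_top μ _⟩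
    have hempty : (⋂ n : ℕ, Set.Ioi (n : ℝ)) = ∅ := by
      ext x; simp only [Set.mem_iInter, Set.mem_Ioi, Set.mem_empty_iff_false, iff_false, not_forall, not_lt]
      obtain ⟨n, hn⟩ := exists_nat_gt x
      exact ⟨n, hn.le⟩
    rw [hempty, measure_empty] at h1
    have := h1.eventually (eventually_lt_nhds (by norm_num : (0:ℝ≥0∞) < 1))
    obtain ⟨n, hn⟩ := this.exists
    exact ⟨(n : ℝ), hn.le⟩
  have hbdd : BddBelow S := by
    have h1 : Tendsto (fun n : ℕ => μ (Set.Ioi (-(n : ℝ)))) atTop (nhds (μ (⋃ n : ℕ, Set.Ioi (-(n : ℝ))))) := by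
      apply tendsto_measure_iUnion_atTop
      intro m n hmn
      exact Set.Ioi_subset_Ioi (by simp; exact_mod_cast hmn)
    have huniv : (⋃ n : ℕ, Set.Ioi (-(n : ℝ))) = Set.univ := by
      ext x; simp only [Set.mem_iUnion, Set.mem_Ioi, Set.mem_univ, iff_true]
      obtain ⟨n, hn⟩ := exists_nat_gt (-x)
      exact ⟨n, by linarith⟩
    rw [huniv, h2] at h1
    have := h1.eventually (eventually_gt_nhds (by norm_num : (1:ℝ≥0∞) < 2))
    obtain ⟨n, hn⟩ := this.exists
    refine ⟨-(n : ℝ), fun x hx => ?_⟩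
    by_contra hlt
    push_neg at hlt
    exact absurd (le_trans (measure_mono (Set.Ioi_subset_Ioi hlt.le)) hx) (not_le.2 hn)
  set a := sInf S with ha
  refine ⟨a, ?_, ?_⟩
  · have key : ∀ n : ℕ, μ (Set.Ioi (a + 1/(n+1))) ≤ 1 := by
      intro n
      obtain ⟨x, hxS, hx⟩ := Real.lt_sInf_add_pos hne
        (by positivity : (0:ℝ) < 1/(n+1))
      exact le_trans (measure_mono (Set.Ioi_subset_Ioi hx.le)) hxS
    have hunion : Set.Ioi a = ⋃ n : ℕ, Set.Ioi (a + 1/(n+1)) := by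
      ext x
      simp only [Set.mem_Ioi, Set.mem_iUnion]
      constructor
      · intro hx
        obtain ⟨n, hn⟩ := exists_nat_one_div_lt (by linarith : (0:ℝ) < x - a)
        exact ⟨n, by push_cast at hn ⊢; linarith⟩
      · rintro ⟨n, hn⟩
        have : (0:ℝ) < 1/(n+1) := by positivity
        linarith
    have hmono : ∀ {i j : ℕ}, i ≤ j → Set.Ioi (a + 1/(i+1)) ⊆ Set.Ioi (a + 1/(j+1)) := by
      intro i j hij
      apply Set.Ioi_subset_Ioi
      have : (1:ℝ)/(j+1) ≤ 1/(i+1) := by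
        apply one_div_le_one_div_of_le (by positivity)
        exact_mod_cast add_le_add_left (Nat.cast_le.2 hij) 1
      linarith
    rw [hunion, Directed.measure_iUnion]
    · exact iSup_le key
    · exact fun m n => ⟨max m n, hmono (le_max_left m n), hmono (le_max_right m n)⟩
  · have key : ∀ n : ℕ, 1 ≤ μ (Set.Ioi (a - 1/(n+1))) := by
      intro n
      have hnot : (a - 1/(n+1)) ∉ S := by
        intro hmem
        have := csInf_le hbdd hmem
        have hpos : (0:ℝ) < 1/(n+1) := by positivity
        rw [← ha] at this; linarith
      have hnot' : ¬ μ (Set.Ioi (a - 1/(n+1))) ≤ 1 := fun hle => hnot hle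
      exact (not_le.mp hnot').le
    have hinter : Set.Ici a = ⋂ n : ℕ, Set.Ioi (a - 1/(n+1)) := by
      ext x
      simp only [Set.mem_Ici, Set.mem_iInter, Set.mem_Ioi]
      constructor
      · intro hx n
        have : (0:ℝ) < 1/(n+1) := by positivity
        linarith
      · intro h
        by_contra hlt
        push_neg at hlt
        obtain ⟨n, hn⟩ := exists_nat_one_div_lt (by linarith : (0:ℝ) < a - x)
        have := h n
        push_cast at hn
        linarith
    have hmono : ∀ {i j : ℕ}, i ≤ j → Set.Ioi (a - 1/(j+1)) ⊆ Set.Ioi (a - 1/(i+1)) := by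
      intro i j hij
      apply Set.Ioi_subset_Ioi
      have : (1:ℝ)/(j+1) ≤ 1/(i+1) := by
        apply one_div_le_one_div_of_le (by positivity)
        exact_mod_cast add_le_add_left (Nat.cast_le.2 hij) 1
      linarith
    rw [hinter, Directed.measure_iInter]
    · exact le_iInf key
    · exact fun n => measurableSet_Ioi.nullMeasurableSet
    · exact fun m n => ⟨max m n, hmono (le_max_left m n), hmono (le_max_right m n)⟩
    · exact ⟨0, measure_ne_top μ _⟩

noncomputable def nuTop (μ : Measure ℝ) (a : ℝ) : Measure ℝ :=
  μ.restrict (Set.Ioi a) + ((1 : ℝ≥0∞) - μ (Set.Ioi a)) • Measure.dirac a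

noncomputable def nuBot (μ : Measure ℝ) (a : ℝ) : Measure ℝ :=
  μ.restrict (Set.Iio a) + (μ {a} - ((1 : ℝ≥0∞) - μ (Set.Ioi a))) • Measure.dirac a

lemma restrict_Iic_add_Ioi (b : Measure ℝ) (a : ℝ) :
    b.restrict (Set.Iic a) + b.restrict (Set.Ioi a) = b := by
  rw [← Measure.restrict_union (Set.Iic_disjoint_Ioi le_rfl) measurableSet_Ioi,
    Set.Iic_union_Ioi, Measure.restrict_univ]

lemma restrict_Iio_add_Ici (b : Measure ℝ) (a : ℝ) :
    b.restrict (Set.Iio a) + b.restrict (Set.Ici a) = b := by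
  rw [← Measure.restrict_union (Set.Iio_disjoint_Ici le_rfl) measurableSet_Ici,
    Set.Iio_union_Ici, Measure.restrict_univ]

lemma singleton_add_Ioi (μ : Measure ℝ) (a : ℝ) :
    μ {a} • Measure.dirac a + μ.restrict (Set.Ioi a) = μ.restrict (Set.Ici a) := by
  rw [← Measure.restrict_singleton, ← Measure.restrict_union ?dis measurableSet_Ioi]
  · congr 1
    ext x
    simp only [Set.mem_union, Set.mem_singleton_iff, Set.mem_Ioi, Set.mem_Ici]
    constructor
    · rintro (rfl | h); exacts [le_rfl, h.le]
    · intro h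
      rcases eq_or_lt_of_le h with h' | h'
      exacts [Or.inl h'.symm, Or.inr h']
  case dis =>
    simp only [Set.disjoint_singleton_left, Set.mem_Ioi]
    exact lt_irrefl a

lemma measure_singleton_eq (μ : Measure ℝ) (a : ℝ) :
    μ (Set.Ici a) = μ {a} + μ (Set.Ioi a) := by
  have := singleton_add_Ioi μ a
  have h1 := congrArg (fun ν : Measure ℝ => ν Set.univ) this
  simpa using h1.symm

lemma nuTop_mass (μ : Measure ℝ) [IsFiniteMeasure μ] {a : ℝ} (hIoi : μ (Set.Ioi a) ≤ 1) :
    nuTop μ a Set.univ = 1 := by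
  simp only [nuTop, Measure.coe_add, Pi.add_apply, Measure.restrict_apply_univ,
    Measure.smul_apply, smul_eq_mul, Measure.dirac_apply_of_mem (Set.mem_univ a), mul_one]
  exact add_tsub_cancel_of_le hIoi

lemma nuTop_add_nuBot (μ : Measure ℝ) [IsFiniteMeasure μ] {a : ℝ}
    (hIoi : μ (Set.Ioi a) ≤ 1) (hIci : 1 ≤ μ (Set.Ici a)) :
    nuTop μ a + nuBot μ a = μ := by
  have hθ : (1 : ℝ≥0∞) - μ (Set.Ioi a) ≤ μ {a} := by
    rw [measure_singleton_eq] at hIci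
    exact tsub_le_iff_right.2 hIci
  have key : ((1 : ℝ≥0∞) - μ (Set.Ioi a)) • Measure.dirac a
      + (μ {a} - ((1 : ℝ≥0∞) - μ (Set.Ioi a))) • Measure.dirac a = μ {a} • Measure.dirac a := by
    rw [← add_smul, add_tsub_cancel_of_le hθ]
  rw [nuTop, nuBot]
  calc μ.restrict (Set.Ioi a) + ((1:ℝ≥0∞) - μ (Set.Ioi a)) • Measure.dirac a
      + (μ.restrict (Set.Iio a) + (μ {a} - ((1:ℝ≥0∞) - μ (Set.Ioi a))) • Measure.dirac a)
      = μ.restrict (Set.Iio a) + (μ {a} • Measure.dirac a + μ.restrict (Set.Ioi a)) := by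
        rw [← key]; abel
    _ = μ := by rw [singleton_add_Ioi, restrict_Iio_add_Ici]


lemma isCoupling_diag (b : Measure ℝ) : IsCoupling (b.map (fun x => (x, x))) b b := by
  have hm : Measurable (fun x : ℝ => (x, x)) := measurable_id.prodMk measurable_id
  constructor
  · rw [Measure.map_map measurable_fst hm]; exact Measure.map_id
  · rw [Measure.map_map measurable_snd hm]; exact Measure.map_id

lemma ecost_diag (b : Measure ℝ) : ecost (b.map (fun x => (x, x))) = 0 := by
  have hm : Measurable (fun x : ℝ => (x, x)) := measurable_id.prodMk measurable_id
  rw [ecost, lintegral_map (measurable_fst.edist measurable_snd) hm]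
  simp

lemma sigma_top (μ : Measure ℝ) [IsFiniteMeasure μ] (hint : Integrable (fun y : ℝ => y) μ)
    {a : ℝ} (hIoi : μ (Set.Ioi a) ≤ 1) (hIci : 1 ≤ μ (Set.Ici a))
    {b b2 : Measure ℝ} (hbb : b + b2 = μ) (hb1 : b Set.univ = 1) :
    ∃ σ : Measure (ℝ × ℝ), IsCoupling σ (nuTop μ a) b ∧
      ∫ y, y ∂b ≤ ∫ y, y ∂(nuTop μ a) ∧
      ecost σ = ENNReal.ofReal ((∫ y, y ∂(nuTop μ a)) - ∫ y, y ∂b) := by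
  haveI : IsFiniteMeasure b := ⟨by rw [hb1]; exact ENNReal.one_lt_top⟩
  have hble : b ≤ μ := by
    have : b ≤ b + b2 := Measure.le_add_right le_rfl
    rwa [hbb] at this
  have hνle : nuTop μ a ≤ μ := by
    have : nuTop μ a ≤ nuTop μ a + nuBot μ a := Measure.le_add_right le_rfl
    rwa [nuTop_add_nuBot μ hIoi hIci] at this
  have hintb : Integrable (fun y : ℝ => y) b := hint.mono_measure hble
  have hintν : Integrable (fun y : ℝ => y) (nuTop μ a) := hint.mono_measure hνle
  set θ := (1:ℝ≥0∞) - μ (Set.Ioi a) with hθ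
  set rem : Measure ℝ := b2.restrict (Set.Ioi a) + θ • Measure.dirac a with hrem
  have hres : μ.restrict (Set.Ioi a) = b.restrict (Set.Ioi a) + b2.restrict (Set.Ioi a) := by
    rw [← hbb, Measure.restrict_add]
  have hdecomp : b.restrict (Set.Ioi a) + rem = nuTop μ a := by
    rw [hrem, nuTop, ← hθ, hres]
    abel
  set c := b (Set.Iic a) with hc_def
  have hc_le : c ≤ 1 := by rw [hc_def, ← hb1]; exact measure_mono (Set.subset_univ _)
  have hc_top : c ≠ ∞ := (lt_of_le_of_lt hc_le ENNReal.one_lt_top).ne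
  have hbIoi_top : b (Set.Ioi a) ≠ ∞ := (measure_lt_top b _).ne
  have hmassb : b (Set.Ioi a) + c = 1 := by
    have := congrArg (fun m : Measure ℝ => m Set.univ) (restrict_Iic_add_Ioi b a)
    simp only [Measure.coe_add, Pi.add_apply, Measure.restrict_apply_univ] at this
    rw [hb1] at this
    rw [← this]; ring
  have hrem_mass : rem Set.univ = c := by
    have h1 : b (Set.Ioi a) + rem Set.univ = 1 := by
      have := congrArg (fun m : Measure ℝ => m Set.univ) hdecomp
      simp only [Measure.coe_add, Pi.add_apply, Measure.restrict_apply_univ] at this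
      rw [nuTop_mass μ hIoi] at this
      exact this
    rw [← hmassb] at h1
    exact (ENNReal.add_right_inj hbIoi_top).mp h1
  have hremIio : rem (Set.Iio a) = 0 := by
    rw [hrem]
    simp only [Measure.coe_add, Pi.add_apply, Measure.restrict_apply measurableSet_Iio,
      Measure.smul_apply, smul_eq_mul]
    rw [Set.Iio_inter_Ioi]
    simp [Set.Ioo_self, Measure.dirac_apply' a measurableSet_Iio]
  by_cases hc : c = 0
  · have hrem0 : rem = 0 := by
      apply Measure.measure_univ_eq_zero.1
      rw [hrem_mass]; exact hc
    have hbIic0 : b.restrict (Set.Iic a) = 0 := by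
      apply Measure.measure_univ_eq_zero.1
      rw [Measure.restrict_apply_univ]; exact hc
    have hb_eq : b.restrict (Set.Ioi a) = b := by
      conv_rhs => rw [← restrict_Iic_add_Ioi b a]
      rw [hbIic0, zero_add]
    have hν_eq : nuTop μ a = b := by rw [← hdecomp, hrem0, add_zero, hb_eq]
    refine ⟨b.map (fun x => (x, x)), by rw [hν_eq]; exact isCoupling_diag b,
      by rw [hν_eq], ?_⟩
    rw [ecost_diag, hν_eq]
    simp
  · haveI : IsFiniteMeasure rem := ⟨by rw [hrem_mass]; exact lt_of_le_of_lt hc_le ENNReal.one_lt_top⟩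
    have hm : Measurable (fun x : ℝ => (x, x)) := measurable_id.prodMk measurable_id
    set σ := (b.restrict (Set.Ioi a)).map (fun x => (x, x))
      + c⁻¹ • (rem.prod (b.restrict (Set.Iic a))) with hσ
    have hcoup : IsCoupling σ (nuTop μ a) b := by
      constructor
      · rw [hσ, Measure.map_add _ _ measurable_fst, Measure.map_smul,
          Measure.map_map measurable_fst hm, Measure.map_fst_prod, Measure.restrict_apply_univ,
          ← hc_def, smul_smul, ENNReal.inv_mul_cancel hc hc_top, one_smul,
          show (Prod.fst ∘ fun x : ℝ => (x, x)) = id from rfl, Measure.map_id]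
        exact hdecomp
      · rw [hσ, Measure.map_add _ _ measurable_snd, Measure.map_smul,
          Measure.map_map measurable_snd hm, Measure.map_snd_prod, hrem_mass,
          smul_smul, ENNReal.inv_mul_cancel hc hc_top, one_smul,
          show (Prod.snd ∘ fun x : ℝ => (x, x)) = id from rfl, Measure.map_id, add_comm]
        exact restrict_Iic_add_Ioi b a
    have hae : ∀ᵐ z ∂σ, z.2 ≤ z.1 := by
      rw [ae_iff]
      have hSm : MeasurableSet {z : ℝ × ℝ | z.1 < z.2} := measurableSet_lt measurable_fst measurable_snd
      have hSeq : {z : ℝ × ℝ | ¬ z.2 ≤ z.1} = {z : ℝ × ℝ | z.1 < z.2} := by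
        ext z; simp [not_le]
      rw [hSeq, hσ]
      simp only [Measure.coe_add, Pi.add_apply, Measure.smul_apply, smul_eq_mul]
      have hdiag : ((b.restrict (Set.Ioi a)).map (fun x => (x, x))) {z : ℝ × ℝ | z.1 < z.2} = 0 := by
        rw [Measure.map_apply hm hSm]
        convert measure_empty (μ := b.restrict (Set.Ioi a))
        ext x; simp
      have hprod : (rem.prod (b.restrict (Set.Iic a))) {z : ℝ × ℝ | z.1 < z.2} = 0 := by
        have hsub : {z : ℝ × ℝ | z.1 < z.2} ⊆
            (Set.Iio a ×ˢ Set.univ) ∪ (Set.univ ×ˢ Set.Ioi a) := by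
          rintro ⟨x, y⟩ hxy
          simp only [Set.mem_setOf_eq] at hxy
          by_cases hx : x < a
          · exact Or.inl ⟨hx, Set.mem_univ _⟩
          · push_neg at hx
            exact Or.inr ⟨Set.mem_univ _, lt_of_le_of_lt hx hxy⟩
        refine le_antisymm (le_trans (measure_mono hsub) ?_) zero_le
        refine le_trans (measure_union_le _ _) ?_
        rw [Measure.prod_prod, Measure.prod_prod, hremIio,
          Measure.restrict_apply measurableSet_Ioi, Set.Ioi_inter_Iic]
        simp
      rw [hdiag, hprod, mul_zero, add_zero]
    have h1 : Integrable (fun z : ℝ × ℝ => z.1) σ := integrable_fst hcoup hintν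
    have h2 : Integrable (fun z : ℝ × ℝ => z.2) σ := integrable_snd hcoup hintb
    have hsub : Integrable (fun z : ℝ × ℝ => z.1 - z.2) σ := h1.sub h2
    have hmean : ∫ z, (z.1 - z.2) ∂σ = (∫ y, y ∂(nuTop μ a)) - ∫ y, y ∂b := by
      rw [integral_sub h1 h2, integral_fst_coupling hcoup, integral_snd_coupling hcoup]
    have hnn : 0 ≤ᵐ[σ] fun z : ℝ × ℝ => z.1 - z.2 :=
      hae.mono fun z hz => sub_nonneg.2 hz
    have hmeanle : ∫ y, y ∂b ≤ ∫ y, y ∂(nuTop μ a) := by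
      have := integral_nonneg_of_ae hnn
      rw [hmean] at this
      linarith
    refine ⟨σ, hcoup, hmeanle, ?_⟩
    have hcong : ecost σ = ∫⁻ z, ENNReal.ofReal (z.1 - z.2) ∂σ := by
      rw [ecost]
      apply lintegral_congr_ae
      refine hae.mono fun z hz => ?_
      show edist z.1 z.2 = ENNReal.ofReal (z.1 - z.2)
      rw [edist_dist, Real.dist_eq, abs_of_nonneg (sub_nonneg.2 hz)]
    rw [hcong, ← ofReal_integral_eq_lintegral_ofReal hsub hnn, hmean]

lemma nuBot_mass (μ : Measure ℝ) [IsFiniteMeasure μ] {a : ℝ} (h2 : μ Set.univ = 2)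
    (hIoi : μ (Set.Ioi a) ≤ 1) (hIci : 1 ≤ μ (Set.Ici a)) :
    nuBot μ a Set.univ = 1 := by
  have := congrArg (fun m : Measure ℝ => m Set.univ) (nuTop_add_nuBot μ hIoi hIci)
  simp only [Measure.coe_add, Pi.add_apply] at this
  rw [nuTop_mass μ hIoi, h2] at this
  have h12 : (2 : ℝ≥0∞) = 1 + 1 := by norm_num
  rw [h12] at this
  exact (ENNReal.add_right_inj ENNReal.one_ne_top).mp this

lemma sigma_bot (μ : Measure ℝ) [IsFiniteMeasure μ] (hint : Integrable (fun y : ℝ => y) μ)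
    (h2 : μ Set.univ = 2) {a : ℝ} (hIoi : μ (Set.Ioi a) ≤ 1) (hIci : 1 ≤ μ (Set.Ici a))
    {b b2 : Measure ℝ} (hbb : b + b2 = μ) (hb1 : b Set.univ = 1) :
    ∃ σ : Measure (ℝ × ℝ), IsCoupling σ (nuBot μ a) b ∧
      ∫ y, y ∂(nuBot μ a) ≤ ∫ y, y ∂b ∧
      ecost σ = ENNReal.ofReal ((∫ y, y ∂b) - ∫ y, y ∂(nuBot μ a)) := by
  haveI : IsFiniteMeasure b := ⟨by rw [hb1]; exact ENNReal.one_lt_top⟩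
  have hble : b ≤ μ := by
    have : b ≤ b + b2 := Measure.le_add_right le_rfl
    rwa [hbb] at this
  have hνle : nuBot μ a ≤ μ := by
    have : nuBot μ a ≤ nuTop μ a + nuBot μ a := Measure.le_add_left le_rfl
    rwa [nuTop_add_nuBot μ hIoi hIci] at this
  have hintb : Integrable (fun y : ℝ => y) b := hint.mono_measure hble
  have hintν : Integrable (fun y : ℝ => y) (nuBot μ a) := hint.mono_measure hνle
  set θ2 := μ {a} - ((1:ℝ≥0∞) - μ (Set.Ioi a)) with hθ2
  set rem : Measure ℝ := b2.restrict (Set.Iio a) + θ2 • Measure.dirac a with hrem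
  have hres : μ.restrict (Set.Iio a) = b.restrict (Set.Iio a) + b2.restrict (Set.Iio a) := by
    rw [← hbb, Measure.restrict_add]
  have hdecomp : b.restrict (Set.Iio a) + rem = nuBot μ a := by
    rw [hrem, nuBot, ← hθ2, hres]
    abel
  set c := b (Set.Ici a) with hc_def
  have hc_le : c ≤ 1 := by rw [hc_def, ← hb1]; exact measure_mono (Set.subset_univ _)
  have hc_top : c ≠ ∞ := (lt_of_le_of_lt hc_le ENNReal.one_lt_top).ne
  have hbIio_top : b (Set.Iio a) ≠ ∞ := (measure_lt_top b _).ne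
  have hmassb : b (Set.Iio a) + c = 1 := by
    have := congrArg (fun m : Measure ℝ => m Set.univ) (restrict_Iio_add_Ici b a)
    simp only [Measure.coe_add, Pi.add_apply, Measure.restrict_apply_univ] at this
    rw [hb1] at this
    rw [← this]
  have hrem_mass : rem Set.univ = c := by
    have h1 : b (Set.Iio a) + rem Set.univ = 1 := by
      have := congrArg (fun m : Measure ℝ => m Set.univ) hdecomp
      simp only [Measure.coe_add, Pi.add_apply, Measure.restrict_apply_univ] at this
      rw [nuBot_mass μ h2 hIoi hIci] at this
      exact this
    rw [← hmassb] at h1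
    exact (ENNReal.add_right_inj hbIio_top).mp h1
  have hremIoi : rem (Set.Ioi a) = 0 := by
    rw [hrem]
    simp only [Measure.coe_add, Pi.add_apply, Measure.restrict_apply measurableSet_Ioi,
      Measure.smul_apply, smul_eq_mul]
    rw [Set.Ioi_inter_Iio]
    simp [Set.Ioo_self, Measure.dirac_apply' a measurableSet_Ioi]
  by_cases hc : c = 0
  · have hrem0 : rem = 0 := by
      apply Measure.measure_univ_eq_zero.1
      rw [hrem_mass]; exact hc
    have hbIci0 : b.restrict (Set.Ici a) = 0 := by
      apply Measure.measure_univ_eq_zero.1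
      rw [Measure.restrict_apply_univ]; exact hc
    have hb_eq : b.restrict (Set.Iio a) = b := by
      conv_rhs => rw [← restrict_Iio_add_Ici b a]
      rw [hbIci0, add_zero]
    have hν_eq : nuBot μ a = b := by rw [← hdecomp, hrem0, add_zero, hb_eq]
    refine ⟨b.map (fun x => (x, x)), by rw [hν_eq]; exact isCoupling_diag b,
      by rw [hν_eq], ?_⟩
    rw [ecost_diag, hν_eq]
    simp
  · haveI : IsFiniteMeasure rem := ⟨by rw [hrem_mass]; exact lt_of_le_of_lt hc_le ENNReal.one_lt_top⟩
    have hm : Measurable (fun x : ℝ => (x, x)) := measurable_id.prodMk measurable_id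
    set σ := (b.restrict (Set.Iio a)).map (fun x => (x, x))
      + c⁻¹ • (rem.prod (b.restrict (Set.Ici a))) with hσ
    have hcoup : IsCoupling σ (nuBot μ a) b := by
      constructor
      · rw [hσ, Measure.map_add _ _ measurable_fst, Measure.map_smul,
          Measure.map_map measurable_fst hm, Measure.map_fst_prod, Measure.restrict_apply_univ,
          ← hc_def, smul_smul, ENNReal.inv_mul_cancel hc hc_top, one_smul,
          show (Prod.fst ∘ fun x : ℝ => (x, x)) = id from rfl, Measure.map_id]
        exact hdecomp
      · rw [hσ, Measure.map_add _ _ measurable_snd, Measure.map_smul,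
          Measure.map_map measurable_snd hm, Measure.map_snd_prod, hrem_mass,
          smul_smul, ENNReal.inv_mul_cancel hc hc_top, one_smul,
          show (Prod.snd ∘ fun x : ℝ => (x, x)) = id from rfl, Measure.map_id]
        exact restrict_Iio_add_Ici b a
    have hae : ∀ᵐ z ∂σ, z.1 ≤ z.2 := by
      rw [ae_iff]
      have hSm : MeasurableSet {z : ℝ × ℝ | z.2 < z.1} := measurableSet_lt measurable_snd measurable_fst
      have hSeq : {z : ℝ × ℝ | ¬ z.1 ≤ z.2} = {z : ℝ × ℝ | z.2 < z.1} := by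
        ext z; simp [not_le]
      rw [hSeq, hσ]
      simp only [Measure.coe_add, Pi.add_apply, Measure.smul_apply, smul_eq_mul]
      have hdiag : ((b.restrict (Set.Iio a)).map (fun x => (x, x))) {z : ℝ × ℝ | z.2 < z.1} = 0 := by
        rw [Measure.map_apply hm hSm]
        convert measure_empty (μ := b.restrict (Set.Iio a))
        ext x; simp
      have hprod : (rem.prod (b.restrict (Set.Ici a))) {z : ℝ × ℝ | z.2 < z.1} = 0 := by
        have hsub : {z : ℝ × ℝ | z.2 < z.1} ⊆
            (Set.Ioi a ×ˢ Set.univ) ∪ (Set.univ ×ˢ Set.Iio a) := by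
          rintro ⟨x, y⟩ hxy
          simp only [Set.mem_setOf_eq] at hxy
          by_cases hx : a < x
          · exact Or.inl ⟨hx, Set.mem_univ _⟩
          · push_neg at hx
            exact Or.inr ⟨Set.mem_univ _, lt_of_lt_of_le hxy hx⟩
        refine le_antisymm (le_trans (measure_mono hsub) ?_) zero_le
        refine le_trans (measure_union_le _ _) ?_
        rw [Measure.prod_prod, Measure.prod_prod, hremIoi,
          Measure.restrict_apply measurableSet_Iio, Set.Iio_inter_Ici]
        simp
      rw [hdiag, hprod, mul_zero, add_zero]
    have h1 : Integrable (fun z : ℝ × ℝ => z.1) σ := integrable_fst hcoup hintν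
    have h2' : Integrable (fun z : ℝ × ℝ => z.2) σ := integrable_snd hcoup hintb
    have hsub : Integrable (fun z : ℝ × ℝ => z.2 - z.1) σ := h2'.sub h1
    have hmean : ∫ z, (z.2 - z.1) ∂σ = (∫ y, y ∂b) - ∫ y, y ∂(nuBot μ a) := by
      rw [integral_sub h2' h1, integral_fst_coupling hcoup, integral_snd_coupling hcoup]
    have hnn : 0 ≤ᵐ[σ] fun z : ℝ × ℝ => z.2 - z.1 :=
      hae.mono fun z hz => sub_nonneg.2 hz
    have hmeanle : ∫ y, y ∂(nuBot μ a) ≤ ∫ y, y ∂b := by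
      have := integral_nonneg_of_ae hnn
      rw [hmean] at this
      linarith
    refine ⟨σ, hcoup, hmeanle, ?_⟩
    have hcong : ecost σ = ∫⁻ z, ENNReal.ofReal (z.2 - z.1) ∂σ := by
      rw [ecost]
      apply lintegral_congr_ae
      refine hae.mono fun z hz => ?_
      show edist z.1 z.2 = ENNReal.ofReal (z.2 - z.1)
      rw [edist_dist, Real.dist_eq, abs_sub_comm, abs_of_nonneg (sub_nonneg.2 hz)]
    rw [hcong, ← ofReal_integral_eq_lintegral_ofReal hsub hnn, hmean]

lemma corrector_core (μ : Measure ℝ) [IsFiniteMeasure μ] (hint : Integrable (fun y : ℝ => y) μ)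
    (h2 : μ Set.univ = 2) {b₁ b₂ p p2 : Measure ℝ}
    (hb : b₁ + b₂ = μ) (hb₁ : b₁ Set.univ = 1) (hb₂ : b₂ Set.univ = 1)
    (hp : p + p2 = μ) (hp1 : p Set.univ = 1)
    (hε : ∫ y, y ∂b₁ ≤ ∫ y, y ∂p) :
    ∃ q₁ q₂ : Measure ℝ, ∃ γ₁ γ₂ : Measure (ℝ × ℝ),
      q₁ + q₂ = μ ∧ q₁ Set.univ = 1 ∧ q₂ Set.univ = 1 ∧
      (∫ y, y ∂q₁) = ∫ y, y ∂p ∧ (∫ y, y ∂q₂) = ∫ y, y ∂p2 ∧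
      IsCoupling γ₁ q₁ b₁ ∧ IsCoupling γ₂ q₂ b₂ ∧
      ecost γ₁ ≤ ENNReal.ofReal ((∫ y, y ∂p) - ∫ y, y ∂b₁) ∧
      ecost γ₂ ≤ ENNReal.ofReal ((∫ y, y ∂p) - ∫ y, y ∂b₁) := by
  obtain ⟨a, hIoi, hIci⟩ := exists_quantile μ h2
  -- basic integrability and mean identities
  have hble₁ : b₁ ≤ μ := by
    have : b₁ ≤ b₁ + b₂ := Measure.le_add_right le_rfl
    rwa [hb] at this
  have hble₂ : b₂ ≤ μ := by
    have : b₂ ≤ b₁ + b₂ := Measure.le_add_left le_rfl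
    rwa [hb] at this
  have hple : p ≤ μ := by
    have : p ≤ p + p2 := Measure.le_add_right le_rfl
    rwa [hp] at this
  have hp2le : p2 ≤ μ := by
    have : p2 ≤ p + p2 := Measure.le_add_left le_rfl
    rwa [hp] at this
  have hνle : nuTop μ a ≤ μ := by
    have : nuTop μ a ≤ nuTop μ a + nuBot μ a := Measure.le_add_right le_rfl
    rwa [nuTop_add_nuBot μ hIoi hIci] at this
  have hν2le : nuBot μ a ≤ μ := by
    have : nuBot μ a ≤ nuTop μ a + nuBot μ a := Measure.le_add_left le_rfl
    rwa [nuTop_add_nuBot μ hIoi hIci] at this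
  have hintb₁ : Integrable (fun y : ℝ => y) b₁ := hint.mono_measure hble₁
  have hintb₂ : Integrable (fun y : ℝ => y) b₂ := hint.mono_measure hble₂
  have hintp : Integrable (fun y : ℝ => y) p := hint.mono_measure hple
  have hintp2 : Integrable (fun y : ℝ => y) p2 := hint.mono_measure hp2le
  have hintν : Integrable (fun y : ℝ => y) (nuTop μ a) := hint.mono_measure hνle
  have hintν2 : Integrable (fun y : ℝ => y) (nuBot μ a) := hint.mono_measure hν2le
  set M := ∫ y, y ∂μ with hM
  have hMb : (∫ y, y ∂b₁) + ∫ y, y ∂b₂ = M := by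
    rw [hM, ← hb, integral_add_measure hintb₁ hintb₂]
  have hMp : (∫ y, y ∂p) + ∫ y, y ∂p2 = M := by
    rw [hM, ← hp, integral_add_measure hintp hintp2]
  have hMν : (∫ y, y ∂(nuTop μ a)) + ∫ y, y ∂(nuBot μ a) = M := by
    have h' := integral_add_measure hintν hintν2
    rw [nuTop_add_nuBot μ hIoi hIci] at h'
    rw [hM]
    exact h'.symm
  obtain ⟨σ₁, hσ₁c, hs₁m, hσ₁cost⟩ := sigma_top μ hint hIoi hIci hb hb₁
  obtain ⟨σp, hσpc, hτm, hσpcost⟩ := sigma_top μ hint hIoi hIci hp hp1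
  have hb' : b₂ + b₁ = μ := by rw [add_comm]; exact hb
  obtain ⟨σ₂, hσ₂c, hν2s₂, hσ₂cost⟩ := sigma_bot μ hint h2 hIoi hIci hb' hb₂
  set s₁ := ∫ y, y ∂b₁ with hs₁
  set s₂ := ∫ y, y ∂b₂ with hs₂
  set τ₁ := ∫ y, y ∂p with hτ₁
  set τ₂ := ∫ y, y ∂p2 with hτ₂
  set m := ∫ y, y ∂(nuTop μ a) with hm_def
  set m2 := ∫ y, y ∂(nuBot μ a) with hm2_def
  by_cases hε0 : τ₁ = s₁
  · -- no correction needed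
    refine ⟨b₁, b₂, b₁.map (fun x => (x, x)), b₂.map (fun x => (x, x)), hb, hb₁, hb₂,
      hε0.symm, by linarith, isCoupling_diag b₁, isCoupling_diag b₂, ?_, ?_⟩ <;>
      rw [ecost_diag] <;> exact zero_le
  · have hεpos : 0 < τ₁ - s₁ := lt_of_le_of_ne (by linarith) (by intro h; exact hε0 (by linarith))
    have hms : 0 < m - s₁ := by linarith
    set t := (τ₁ - s₁) / (m - s₁) with ht
    have htpos : 0 < t := div_pos hεpos hms
    have ht1 : t ≤ 1 := (div_le_one hms).2 (by linarith)
    have htm : t * (m - s₁) = τ₁ - s₁ := div_mul_cancel₀ _ hms.ne'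
    set q₁ : Measure ℝ := ENNReal.ofReal (1 - t) • b₁ + ENNReal.ofReal t • nuTop μ a with hq₁
    set q₂ : Measure ℝ := ENNReal.ofReal (1 - t) • b₂ + ENNReal.ofReal t • nuBot μ a with hq₂
    have hofsum : ENNReal.ofReal (1 - t) + ENNReal.ofReal t = 1 := by
      rw [← ENNReal.ofReal_add (by linarith) (by linarith)]
      norm_num
    have hsum : q₁ + q₂ = μ := by
      rw [hq₁, hq₂]
      calc ENNReal.ofReal (1 - t) • b₁ + ENNReal.ofReal t • nuTop μ a
          + (ENNReal.ofReal (1 - t) • b₂ + ENNReal.ofReal t • nuBot μ a)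
          = ENNReal.ofReal (1 - t) • (b₁ + b₂)
            + ENNReal.ofReal t • (nuTop μ a + nuBot μ a) := by
            rw [smul_add, smul_add]; abel
        _ = μ := by
            rw [hb, nuTop_add_nuBot μ hIoi hIci, ← add_smul, hofsum, one_smul]
    have hq₁mass : q₁ Set.univ = 1 := by
      rw [hq₁]
      simp only [Measure.coe_add, Pi.add_apply, Measure.smul_apply, smul_eq_mul]
      rw [hb₁, nuTop_mass μ hIoi, mul_one, mul_one, hofsum]
    have hq₂mass : q₂ Set.univ = 1 := by
      rw [hq₂]
      simp only [Measure.coe_add, Pi.add_apply, Measure.smul_apply, smul_eq_mul]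
      rw [hb₂, nuBot_mass μ h2 hIoi hIci, mul_one, mul_one, hofsum]
    have hint_smul : ∀ (c : ℝ) (ν : Measure ℝ), Integrable (fun y : ℝ => y) ν →
        Integrable (fun y : ℝ => y) (ENNReal.ofReal c • ν) :=
      fun c ν hν => hν.smul_measure ENNReal.ofReal_ne_top
    have hmean_comb : ∀ (ν ν' : Measure ℝ), Integrable (fun y : ℝ => y) ν →
        Integrable (fun y : ℝ => y) ν' →
        ∫ y, y ∂(ENNReal.ofReal (1 - t) • ν + ENNReal.ofReal t • ν')
          = (1 - t) * (∫ y, y ∂ν) + t * ∫ y, y ∂ν' := by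
      intro ν ν' hν hν'
      rw [integral_add_measure (hint_smul _ _ hν) (hint_smul _ _ hν'),
        integral_smul_measure, integral_smul_measure,
        ENNReal.toReal_ofReal (by linarith), ENNReal.toReal_ofReal (by linarith)]
      simp [smul_eq_mul]
    have hq₁mean : ∫ y, y ∂q₁ = τ₁ := by
      rw [hq₁, hmean_comb _ _ hintb₁ hintν, ← hs₁, ← hm_def]
      nlinarith [htm]
    have hq₂mean : ∫ y, y ∂q₂ = τ₂ := by
      rw [hq₂, hmean_comb _ _ hintb₂ hintν2, ← hs₂, ← hm2_def]
      nlinarith [htm, hMb, hMp, hMν]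
    -- couplings
    set γ₁ : Measure (ℝ × ℝ) := ENNReal.ofReal (1 - t) • (b₁.map (fun x => (x, x)))
      + ENNReal.ofReal t • σ₁ with hγ₁
    set γ₂ : Measure (ℝ × ℝ) := ENNReal.ofReal (1 - t) • (b₂.map (fun x => (x, x)))
      + ENNReal.ofReal t • σ₂ with hγ₂
    have hcoup₁ : IsCoupling γ₁ q₁ b₁ := by
      constructor
      · rw [hγ₁, Measure.map_add _ _ measurable_fst, Measure.map_smul, Measure.map_smul,
          (isCoupling_diag b₁).1, hσ₁c.1]
      · rw [hγ₁, Measure.map_add _ _ measurable_snd, Measure.map_smul, Measure.map_smul,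
          (isCoupling_diag b₁).2, hσ₁c.2, ← add_smul, hofsum, one_smul]
    have hcoup₂ : IsCoupling γ₂ q₂ b₂ := by
      constructor
      · rw [hγ₂, Measure.map_add _ _ measurable_fst, Measure.map_smul, Measure.map_smul,
          (isCoupling_diag b₂).1, hσ₂c.1]
      · rw [hγ₂, Measure.map_add _ _ measurable_snd, Measure.map_smul, Measure.map_smul,
          (isCoupling_diag b₂).2, hσ₂c.2, ← add_smul, hofsum, one_smul]
    have hcost : ∀ σ : Measure (ℝ × ℝ), ∀ b : Measure ℝ,
        ecost (ENNReal.ofReal (1 - t) • (b.map (fun x => (x, x))) + ENNReal.ofReal t • σ)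
          = ENNReal.ofReal t * ecost σ := by
      intro σ b
      rw [ecost, lintegral_add_measure, lintegral_smul_measure, lintegral_smul_measure]
      have h0 : ∫⁻ z, edist z.1 z.2 ∂(b.map fun x => (x, x)) = 0 := ecost_diag b
      rw [h0, smul_zero, zero_add]
      rfl
    refine ⟨q₁, q₂, γ₁, γ₂, hsum, hq₁mass, hq₂mass, hq₁mean, hq₂mean, hcoup₁, hcoup₂, ?_, ?_⟩
    · rw [hγ₁, hcost, hσ₁cost, ← ENNReal.ofReal_mul (le_of_lt htpos), htm]
    · have heq : s₂ - m2 = m - s₁ := by linarith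
      rw [hγ₂, hcost, hσ₂cost, heq, ← ENNReal.ofReal_mul (le_of_lt htpos), htm]

lemma corrector (μ : Measure ℝ) [IsFiniteMeasure μ] (hint : Integrable (fun y : ℝ => y) μ)
    (h2 : μ Set.univ = 2) {b₁ b₂ p p2 : Measure ℝ}
    (hb : b₁ + b₂ = μ) (hb₁ : b₁ Set.univ = 1) (hb₂ : b₂ Set.univ = 1)
    (hp : p + p2 = μ) (hp1 : p Set.univ = 1) (hp2 : p2 Set.univ = 1) :
    ∃ q₁ q₂ : Measure ℝ, ∃ γ₁ γ₂ : Measure (ℝ × ℝ),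
      q₁ + q₂ = μ ∧ q₁ Set.univ = 1 ∧ q₂ Set.univ = 1 ∧
      (∫ y, y ∂q₁) = ∫ y, y ∂p ∧ (∫ y, y ∂q₂) = ∫ y, y ∂p2 ∧
      IsCoupling γ₁ q₁ b₁ ∧ IsCoupling γ₂ q₂ b₂ ∧
      ecost γ₁ ≤ ENNReal.ofReal |(∫ y, y ∂p) - ∫ y, y ∂b₁| ∧
      ecost γ₂ ≤ ENNReal.ofReal |(∫ y, y ∂p) - ∫ y, y ∂b₁| := by
  rcases le_or_gt (∫ y, y ∂b₁) (∫ y, y ∂p) with hle | hlt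
  · obtain ⟨q₁, q₂, γ₁, γ₂, h1, h2', h3, h4, h5, h6, h7, h8, h9⟩ :=
      corrector_core μ hint h2 hb hb₁ hb₂ hp hp1 hle
    rw [← abs_of_nonneg (by linarith : (0:ℝ) ≤ (∫ y, y ∂p) - ∫ y, y ∂b₁)] at h8 h9
    exact ⟨q₁, q₂, γ₁, γ₂, h1, h2', h3, h4, h5, h6, h7, h8, h9⟩
  · have hb' : b₂ + b₁ = μ := by rw [add_comm]; exact hb
    have hp' : p2 + p = μ := by rw [add_comm]; exact hp
    have hble₁ : b₁ ≤ μ := by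
      have : b₁ ≤ b₁ + b₂ := Measure.le_add_right le_rfl
      rwa [hb] at this
    have hble₂ : b₂ ≤ μ := by
      have : b₂ ≤ b₁ + b₂ := Measure.le_add_left le_rfl
      rwa [hb] at this
    have hple : p ≤ μ := by
      have : p ≤ p + p2 := Measure.le_add_right le_rfl
      rwa [hp] at this
    have hp2le : p2 ≤ μ := by
      have : p2 ≤ p + p2 := Measure.le_add_left le_rfl
      rwa [hp] at this
    have hintb₁ : Integrable (fun y : ℝ => y) b₁ := hint.mono_measure hble₁
    have hintb₂ : Integrable (fun y : ℝ => y) b₂ := hint.mono_measure hble₂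
    have hintp : Integrable (fun y : ℝ => y) p := hint.mono_measure hple
    have hintp2 : Integrable (fun y : ℝ => y) p2 := hint.mono_measure hp2le
    have hMb : (∫ y, y ∂b₁) + ∫ y, y ∂b₂ = ∫ y, y ∂μ := by
      rw [← hb, integral_add_measure hintb₁ hintb₂]
    have hMp : (∫ y, y ∂p) + ∫ y, y ∂p2 = ∫ y, y ∂μ := by
      rw [← hp, integral_add_measure hintp hintp2]
    have hle' : ∫ y, y ∂b₂ ≤ ∫ y, y ∂p2 := by linarith
    obtain ⟨q₂, q₁, γ₂, γ₁, h1, h2', h3, h4, h5, h6, h7, h8, h9⟩ :=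
      corrector_core μ hint h2 hb' hb₂ hb₁ hp' hp2 hle'
    have habs : (∫ y, y ∂p2) - ∫ y, y ∂b₂ = |(∫ y, y ∂p) - ∫ y, y ∂b₁| := by
      rw [abs_of_neg (by linarith : (∫ y, y ∂p) - ∫ y, y ∂b₁ < 0)]
      linarith
    rw [habs] at h8 h9
    exact ⟨q₁, q₂, γ₁, γ₂, by rw [add_comm]; exact h1, h3, h2', h5, h4, h7, h6, h9, h8⟩

lemma map_snd_withDensity (π : Measure (ℝ × ℝ)) {g : ℝ → ℝ≥0∞} (hg : Measurable g) :
    (π.withDensity (fun z => g z.2)).map Prod.snd = (π.map Prod.snd).withDensity g := by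
  ext s hs
  have hind : ∀ z : ℝ × ℝ, s.indicator g z.2
      = (Prod.snd ⁻¹' s).indicator (fun z : ℝ × ℝ => g z.2) z := by
    intro z; by_cases h : z.2 ∈ s <;> simp [Set.indicator, h]
  rw [Measure.map_apply measurable_snd hs, withDensity_apply _ (measurable_snd hs),
    withDensity_apply _ hs, ← lintegral_indicator (measurable_snd hs),
    ← lintegral_indicator hs, lintegral_map (hg.indicator hs) measurable_snd]
  exact (lintegral_congr hind).symm

lemma integrable_id_of_memPr {p : Measure ℝ} (h : MemPr 1 p) :
    Integrable (fun y : ℝ => y) p := by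
  haveI := h.1
  obtain ⟨y0, hy⟩ := h.2
  simp_rw [Real.rpow_one] at hy
  have h' : Integrable (fun y : ℝ => dist y y0 + |y0|) p := hy.add (integrable_const _)
  refine h'.mono' measurable_id.aestronglyMeasurable ?_
  refine Eventually.of_forall fun y => ?_
  rw [Real.norm_eq_abs, Real.dist_eq]
  calc |y| = |(y - y0) + y0| := by ring_nf
    _ ≤ |y - y0| + |y0| := abs_add_le _ _

lemma memPr_of_mass_int {q : Measure ℝ} (h1 : q Set.univ = 1)
    (hint : Integrable (fun y : ℝ => y) q) : MemPr 1 q := by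
  refine ⟨⟨h1⟩, 0, ?_⟩
  simp only [Real.rpow_one, Real.dist_0_eq_abs]
  exact hint.abs

lemma map_fst_univ (ρ : Measure (ℝ × ℝ)) : (ρ.map Prod.fst) Set.univ = ρ Set.univ := by
  rw [Measure.map_apply measurable_fst MeasurableSet.univ]; rfl

lemma map_snd_univ (ρ : Measure (ℝ × ℝ)) : (ρ.map Prod.snd) Set.univ = ρ Set.univ := by
  rw [Measure.map_apply measurable_snd MeasurableSet.univ]; rfl

lemma ecost_withDensity_le (π : Measure (ℝ × ℝ)) {g : ℝ → ℝ≥0∞} (hg : Measurable g)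
    (hg1 : ∀ y, g y ≤ 1) : ecost (π.withDensity (fun z => g z.2)) ≤ ecost π := by
  rw [ecost, ecost, lintegral_withDensity_eq_lintegral_mul π
    (show Measurable fun z : ℝ × ℝ => g z.2 from hg.comp measurable_snd)
    (measurable_fst.edist measurable_snd)]
  refine lintegral_mono fun z => ?_
  calc (fun z : ℝ × ℝ => g z.2) z * edist z.1 z.2 ≤ 1 * edist z.1 z.2 :=
        mul_le_mul_left (hg1 _) _
    _ = edist z.1 z.2 := one_mul _

lemma withDensity_compl {α : Type*} [MeasurableSpace α] (π : Measure α) {f f2 : α → ℝ≥0∞}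
    (hf2 : Measurable f2) (h : ∀ x, f x + f2 x = 1) :
    π.withDensity f + π.withDensity f2 = π := by
  rw [← withDensity_add_right _ hf2,
    show (f + f2) = fun _ => 1 from funext h,
    show (fun _ : α => (1:ℝ≥0∞)) = 1 from rfl, withDensity_one]

end MartApprox

open MartApprox

/-- **Martingale approximative sequence lemma, two-measure case** (Lemma 3.7 for
`N = 2`): competitors matching the total sum and the barycenters can be approximated
along `W₁`-convergent sequences. -/
theorem martingale_approximative_sequence_two {p₁ p₂ q₁ q₂ : Measure ℝ}
    (hp₁ : MemPr 1 p₁) (hp₂ : MemPr 1 p₂) (hq₁ : MemPr 1 q₁) (hq₂ : MemPr 1 q₂)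
    (hsum : p₁ + p₂ = q₁ + q₂)
    (hbar₁ : ∫ y, y ∂p₁ = ∫ y, y ∂q₁) (hbar₂ : ∫ y, y ∂p₂ = ∫ y, y ∂q₂)
    (pk₁ pk₂ : ℕ → Measure ℝ)
    (hpk : ∀ k, MemPr 1 (pk₁ k) ∧ MemPr 1 (pk₂ k))
    (hconv₁ : TendstoWr 1 pk₁ p₁) (hconv₂ : TendstoWr 1 pk₂ p₂) :
    ∃ qk₁ qk₂ : ℕ → Measure ℝ,
      (∀ k, MemPr 1 (qk₁ k) ∧ MemPr 1 (qk₂ k)) ∧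
      (∀ k, qk₁ k + qk₂ k = pk₁ k + pk₂ k) ∧
      (∀ k, ∫ y, y ∂(qk₁ k) = ∫ y, y ∂(pk₁ k) ∧
            ∫ y, y ∂(qk₂ k) = ∫ y, y ∂(pk₂ k)) ∧
      TendstoWr 1 qk₁ q₁ ∧ TendstoWr 1 qk₂ q₂ := by
  classical
  haveI := hp₁.1; haveI := hp₂.1; haveI := hq₁.1; haveI := hq₂.1
  have hip₁ := integrable_id_of_memPr hp₁
  have hip₂ := integrable_id_of_memPr hp₂
  have hiq₁ := integrable_id_of_memPr hq₁
  have hiq₂ := integrable_id_of_memPr hq₂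
  set μ0 := p₁ + p₂ with hμ0
  have hiμ0 : Integrable (fun y : ℝ => y) μ0 := integrable_add_measure.2 ⟨hip₁, hip₂⟩
  have hq₁le : q₁ ≤ μ0 := by
    rw [hsum]; exact Measure.le_add_right le_rfl
  set g : ℝ → ℝ≥0∞ := fun y => min (q₁.rnDeriv μ0 y) 1 with hgdef
  have hgm : Measurable g := (Measure.measurable_rnDeriv _ _).min measurable_const
  have hg1 : ∀ y, g y ≤ 1 := fun y => min_le_right _ _
  have hgdens : μ0.withDensity g = q₁ := by
    have hac : q₁ ≪ μ0 := hq₁le.absolutelyContinuous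
    have h1 : μ0.withDensity (q₁.rnDeriv μ0) = q₁ := Measure.withDensity_rnDeriv_eq q₁ μ0 hac
    have h2 : q₁.rnDeriv μ0 ≤ᵐ[μ0] 1 := Measure.rnDeriv_le_one_of_le hq₁le
    rw [← h1]
    apply withDensity_congr_ae
    exact h2.mono fun y hy => min_eq_left hy
  set g2 : ℝ → ℝ≥0∞ := fun y => 1 - g y with hg2def
  have hg2m : Measurable g2 := measurable_const.sub hgm
  have hg21 : ∀ y, g2 y ≤ 1 := fun y => tsub_le_self
  have hq21 : ∀ y, g y + g2 y = 1 := fun y => add_tsub_cancel_of_le (hg1 y)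
  have hdens2 : μ0.withDensity g2 = q₂ := by
    have hsplit : μ0.withDensity g + μ0.withDensity g2 = μ0 := withDensity_compl μ0 hg2m hq21
    rw [hgdens] at hsplit
    have hq12 : q₁ + q₂ = μ0 := hsum.symm
    ext s hs
    have e1 := congrArg (fun m : Measure ℝ => m s) hsplit
    have e2 := congrArg (fun m : Measure ℝ => m s) hq12
    simp only [Measure.coe_add, Pi.add_apply] at e1 e2
    exact (ENNReal.add_right_inj (measure_lt_top q₁ s).ne).mp (e1.trans e2.symm)
  -- near-optimal couplings
  have hex₁ : ∀ k, ∃ π : Measure (ℝ × ℝ), IsCoupling π (pk₁ k) p₁ ∧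
      (∫ z, dist z.1 z.2 ∂π) < WrPow 1 (pk₁ k) p₁ + 1/(k+1) := by
    intro k
    haveI := (hpk k).1.1
    obtain ⟨π, hc, hv⟩ := exists_coupling_lt (p := pk₁ k) (q := p₁)
      (δ := 1/(k+1)) (by positivity)
    refine ⟨π, hc, ?_⟩
    simpa [Real.rpow_one] using hv
  have hex₂ : ∀ k, ∃ π : Measure (ℝ × ℝ), IsCoupling π (pk₂ k) p₂ ∧
      (∫ z, dist z.1 z.2 ∂π) < WrPow 1 (pk₂ k) p₂ + 1/(k+1) := by
    intro k
    haveI := (hpk k).2.1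
    obtain ⟨π, hc, hv⟩ := exists_coupling_lt (p := pk₂ k) (q := p₂)
      (δ := 1/(k+1)) (by positivity)
    refine ⟨π, hc, ?_⟩
    simpa [Real.rpow_one] using hv
  choose π₁ hπ₁c hπ₁v using hex₁
  choose π₂ hπ₂c hπ₂v using hex₂
  have hipk₁ : ∀ k, Integrable (fun y : ℝ => y) (pk₁ k) :=
    fun k => integrable_id_of_memPr (hpk k).1
  have hipk₂ : ∀ k, Integrable (fun y : ℝ => y) (pk₂ k) :=
    fun k => integrable_id_of_memPr (hpk k).2
  have hA₁0 : ∀ k, 0 ≤ ∫ z, dist z.1 z.2 ∂(π₁ k) := fun k => integral_nonneg fun z => dist_nonneg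
  have hA₂0 : ∀ k, 0 ≤ ∫ z, dist z.1 z.2 ∂(π₂ k) := fun k => integral_nonneg fun z => dist_nonneg
  have hA₁cost : ∀ k, ecost (π₁ k) = ENNReal.ofReal (∫ z, dist z.1 z.2 ∂(π₁ k)) :=
    fun k => ecost_eq_ofReal (hπ₁c k) (hipk₁ k) hip₁
  have hA₂cost : ∀ k, ecost (π₂ k) = ENNReal.ofReal (∫ z, dist z.1 z.2 ∂(π₂ k)) :=
    fun k => ecost_eq_ofReal (hπ₂c k) (hipk₂ k) hip₂
  have main : ∀ k, ∃ (Q₁ Q₂ : Measure ℝ),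
      Q₁ + Q₂ = pk₁ k + pk₂ k ∧ Q₁ Set.univ = 1 ∧ Q₂ Set.univ = 1 ∧
      Integrable (fun y : ℝ => y) Q₁ ∧ Integrable (fun y : ℝ => y) Q₂ ∧
      (∫ y, y ∂Q₁) = ∫ y, y ∂(pk₁ k) ∧ (∫ y, y ∂Q₂) = ∫ y, y ∂(pk₂ k) ∧
      WrPow 1 Q₁ q₁ ≤ 3 * (∫ z, dist z.1 z.2 ∂(π₁ k)) + 2 * (∫ z, dist z.1 z.2 ∂(π₂ k)) ∧
      WrPow 1 Q₂ q₂ ≤ 3 * (∫ z, dist z.1 z.2 ∂(π₁ k)) + 2 * (∫ z, dist z.1 z.2 ∂(π₂ k)) := by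
    intro k
    haveI := (hpk k).1.1
    haveI := (hpk k).2.1
    set A₁ := ∫ z, dist z.1 z.2 ∂(π₁ k) with hA₁
    set A₂ := ∫ z, dist z.1 z.2 ∂(π₂ k) with hA₂
    set μk := pk₁ k + pk₂ k with hμk
    have h2k : μk Set.univ = 2 := by
      rw [hμk]
      simp only [Measure.coe_add, Pi.add_apply, measure_univ]
      norm_num
    have hikμ : Integrable (fun y : ℝ => y) μk := integrable_add_measure.2 ⟨hipk₁ k, hipk₂ k⟩
    set ρ₁ := (π₁ k).withDensity (fun z => g z.2) + (π₂ k).withDensity (fun z => g z.2) with hρ₁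
    set ρ₂ := (π₁ k).withDensity (fun z => g2 z.2) + (π₂ k).withDensity (fun z => g2 z.2) with hρ₂
    set b₁ := ρ₁.map Prod.fst with hb₁def
    set b₂ := ρ₂.map Prod.fst with hb₂def
    have hq21' : ∀ z : ℝ × ℝ, g z.2 + g2 z.2 = 1 := fun z => hq21 z.2
    have hρρ : ρ₁ + ρ₂ = π₁ k + π₂ k := by
      rw [hρ₁, hρ₂]
      have e1 := withDensity_compl (π₁ k) (f := fun z : ℝ × ℝ => g z.2)
        (f2 := fun z : ℝ × ℝ => g2 z.2) (hg2m.comp measurable_snd) hq21'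
      have e2 := withDensity_compl (π₂ k) (f := fun z : ℝ × ℝ => g z.2)
        (f2 := fun z : ℝ × ℝ => g2 z.2) (hg2m.comp measurable_snd) hq21'
      calc (π₁ k).withDensity (fun z => g z.2) + (π₂ k).withDensity (fun z => g z.2)
          + ((π₁ k).withDensity (fun z => g2 z.2) + (π₂ k).withDensity (fun z => g2 z.2))
          = ((π₁ k).withDensity (fun z => g z.2) + (π₁ k).withDensity (fun z => g2 z.2))
            + ((π₂ k).withDensity (fun z => g z.2) + (π₂ k).withDensity (fun z => g2 z.2)) := by
            abel
        _ = π₁ k + π₂ k := by rw [e1, e2]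
    have hρ₁snd : ρ₁.map Prod.snd = q₁ := by
      rw [hρ₁, Measure.map_add _ _ measurable_snd, map_snd_withDensity _ hgm,
        map_snd_withDensity _ hgm, (hπ₁c k).2, (hπ₂c k).2, ← withDensity_add_measure,
        ← hμ0, hgdens]
    have hρ₂snd : ρ₂.map Prod.snd = q₂ := by
      rw [hρ₂, Measure.map_add _ _ measurable_snd, map_snd_withDensity _ hg2m,
        map_snd_withDensity _ hg2m, (hπ₁c k).2, (hπ₂c k).2, ← withDensity_add_measure,
        ← hμ0, hdens2]
    have hρ₁c : IsCoupling ρ₁ b₁ q₁ := ⟨hb₁def.symm, hρ₁snd⟩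
    have hρ₂c : IsCoupling ρ₂ b₂ q₂ := ⟨hb₂def.symm, hρ₂snd⟩
    have hb₁mass : b₁ Set.univ = 1 := by
      rw [hb₁def, map_fst_univ, ← map_snd_univ, hρ₁snd, measure_univ]
    have hb₂mass : b₂ Set.univ = 1 := by
      rw [hb₂def, map_fst_univ, ← map_snd_univ, hρ₂snd, measure_univ]
    have hbsum : b₁ + b₂ = μk := by
      rw [hb₁def, hb₂def, ← Measure.map_add _ _ measurable_fst, hρρ,
        Measure.map_add _ _ measurable_fst, (hπ₁c k).1, (hπ₂c k).1, hμk]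
    have hb₁le : b₁ ≤ μk := by
      have : b₁ ≤ b₁ + b₂ := Measure.le_add_right le_rfl
      rwa [hbsum] at this
    have hb₂le : b₂ ≤ μk := by
      have : b₂ ≤ b₁ + b₂ := Measure.le_add_left le_rfl
      rwa [hbsum] at this
    have hib₁ : Integrable (fun y : ℝ => y) b₁ := hikμ.mono_measure hb₁le
    have hib₂ : Integrable (fun y : ℝ => y) b₂ := hikμ.mono_measure hb₂le
    have hpksum : pk₁ k + pk₂ k = μk := hμk.symm
    obtain ⟨Q₁, Q₂, γ₁, γ₂, hQsum, hQ₁m, hQ₂m, hQ₁mean, hQ₂mean, hγ₁c, hγ₂c, hγ₁cost, hγ₂cost⟩ :=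
      corrector μk hikμ h2k hbsum hb₁mass hb₂mass hpksum measure_univ measure_univ
    have hQ₁le : Q₁ ≤ μk := by
      have : Q₁ ≤ Q₁ + Q₂ := Measure.le_add_right le_rfl
      rwa [hQsum] at this
    have hQ₂le : Q₂ ≤ μk := by
      have : Q₂ ≤ Q₁ + Q₂ := Measure.le_add_left le_rfl
      rwa [hQsum] at this
    have hiQ₁ : Integrable (fun y : ℝ => y) Q₁ := hikμ.mono_measure hQ₁le
    have hiQ₂ : Integrable (fun y : ℝ => y) Q₂ := hikμ.mono_measure hQ₂le
    -- cost of transport plans ρ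
    have hρ₁cost : ecost ρ₁ ≤ ENNReal.ofReal (A₁ + A₂) := by
      calc ecost ρ₁ = ecost ((π₁ k).withDensity (fun z => g z.2))
          + ecost ((π₂ k).withDensity (fun z => g z.2)) := by
            rw [hρ₁, ecost]; exact lintegral_add_measure _ _ _
        _ ≤ ecost (π₁ k) + ecost (π₂ k) :=
            add_le_add (ecost_withDensity_le _ hgm hg1) (ecost_withDensity_le _ hgm hg1)
        _ = ENNReal.ofReal (A₁ + A₂) := by
            rw [hA₁cost k, hA₂cost k, ← ENNReal.ofReal_add (hA₁0 k) (hA₂0 k)]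
    have hρ₂cost : ecost ρ₂ ≤ ENNReal.ofReal (A₁ + A₂) := by
      calc ecost ρ₂ = ecost ((π₁ k).withDensity (fun z => g2 z.2))
          + ecost ((π₂ k).withDensity (fun z => g2 z.2)) := by
            rw [hρ₂, ecost]; exact lintegral_add_measure _ _ _
        _ ≤ ecost (π₁ k) + ecost (π₂ k) :=
            add_le_add (ecost_withDensity_le _ hg2m hg21) (ecost_withDensity_le _ hg2m hg21)
        _ = ENNReal.ofReal (A₁ + A₂) := by
            rw [hA₁cost k, hA₂cost k, ← ENNReal.ofReal_add (hA₁0 k) (hA₂0 k)]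
    -- bound on |ε|
    have hεb : |(∫ y, y ∂(pk₁ k)) - ∫ y, y ∂b₁| ≤ 2 * A₁ + A₂ := by
      have h1 : |(∫ y, y ∂(pk₁ k)) - ∫ y, y ∂p₁| ≤ A₁ := by
        have := abs_integral_sub_le (hπ₁c k) (hipk₁ k) hip₁
        rwa [hA₁cost k, ENNReal.toReal_ofReal (hA₁0 k)] at this
      have h2 : |(∫ y, y ∂b₁) - ∫ y, y ∂q₁| ≤ A₁ + A₂ := by
        have h3 := abs_integral_sub_le hρ₁c hib₁ hiq₁
        have h4 : (ecost ρ₁).toReal ≤ A₁ + A₂ :=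
          ENNReal.toReal_le_of_le_ofReal (by positivity) hρ₁cost
        linarith
      rw [hbar₁] at h1
      have h5 := abs_sub_le (∫ y, y ∂(pk₁ k)) (∫ y, y ∂q₁) (∫ y, y ∂b₁)
      rw [abs_sub_comm] at h2
      linarith
    -- glue couplings
    haveI : IsFiniteMeasure Q₁ := ⟨by rw [hQ₁m]; exact ENNReal.one_lt_top⟩
    haveI : IsFiniteMeasure Q₂ := ⟨by rw [hQ₂m]; exact ENNReal.one_lt_top⟩
    haveI : IsFiniteMeasure b₁ := ⟨by rw [hb₁mass]; exact ENNReal.one_lt_top⟩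
    haveI : IsFiniteMeasure b₂ := ⟨by rw [hb₂mass]; exact ENNReal.one_lt_top⟩
    obtain ⟨η₁, hη₁c, hη₁cost⟩ := glue hγ₁c hρ₁c
    obtain ⟨η₂, hη₂c, hη₂cost⟩ := glue hγ₂c hρ₂c
    have hfinal : ∀ η : Measure (ℝ × ℝ), ∀ Q : Measure ℝ, ∀ qlim : Measure ℝ,
        IsCoupling η Q qlim → ecost η ≤ ENNReal.ofReal (3 * A₁ + 2 * A₂) →
        WrPow 1 Q qlim ≤ 3 * A₁ + 2 * A₂ := by
      intro η Q qlim hc hcost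
      refine le_trans (WrPow_le_ecost hc) ?_
      exact ENNReal.toReal_le_of_le_ofReal (by positivity) hcost
    have hcost₁ : ecost η₁ ≤ ENNReal.ofReal (3 * A₁ + 2 * A₂) := by
      refine le_trans hη₁cost (le_trans (add_le_add hγ₁cost hρ₁cost) ?_)
      rw [← ENNReal.ofReal_add (abs_nonneg _) (by positivity)]
      apply ENNReal.ofReal_le_ofReal
      linarith
    have hcost₂ : ecost η₂ ≤ ENNReal.ofReal (3 * A₁ + 2 * A₂) := by
      refine le_trans hη₂cost (le_trans (add_le_add hγ₂cost hρ₂cost) ?_)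
      rw [← ENNReal.ofReal_add (abs_nonneg _) (by positivity)]
      apply ENNReal.ofReal_le_ofReal
      linarith
    exact ⟨Q₁, Q₂, hQsum, hQ₁m, hQ₂m, hiQ₁, hiQ₂, hQ₁mean, hQ₂mean,
      hfinal η₁ Q₁ q₁ hη₁c hcost₁, hfinal η₂ Q₂ q₂ hη₂c hcost₂⟩
  choose Q₁ Q₂ hQsum hQ₁m hQ₂m hiQ₁ hiQ₂ hQ₁mean hQ₂mean hw₁ hw₂ using main
  have hA₁lim : Tendsto (fun k => ∫ z, dist z.1 z.2 ∂(π₁ k)) atTop (nhds 0) := by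
    refine squeeze_zero hA₁0 (fun k => (hπ₁v k).le) ?_
    have := hconv₁.add tendsto_one_div_add_atTop_nhds_zero_nat
    simpa using this
  have hA₂lim : Tendsto (fun k => ∫ z, dist z.1 z.2 ∂(π₂ k)) atTop (nhds 0) := by
    refine squeeze_zero hA₂0 (fun k => (hπ₂v k).le) ?_
    have := hconv₂.add tendsto_one_div_add_atTop_nhds_zero_nat
    simpa using this
  have hBlim : Tendsto (fun k => 3 * (∫ z, dist z.1 z.2 ∂(π₁ k))
      + 2 * (∫ z, dist z.1 z.2 ∂(π₂ k))) atTop (nhds 0) := by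
    have := (hA₁lim.const_mul 3).add (hA₂lim.const_mul 2)
    simpa using this
  refine ⟨Q₁, Q₂, fun k => ⟨memPr_of_mass_int (hQ₁m k) (hiQ₁ k),
      memPr_of_mass_int (hQ₂m k) (hiQ₂ k)⟩, hQsum, fun k => ⟨hQ₁mean k, hQ₂mean k⟩, ?_, ?_⟩
  · exact squeeze_zero (fun k => WrPow_nonneg _ _) hw₁ hBlim
  · exact squeeze_zero (fun k => WrPow_nonneg _ _) hw₂ hBlim
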